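/- Let E be a finite-dimensional real inner product space, F a real vector space, and d : F → E, L : E → E linear maps such that L is symmetric (⟨L u, v⟩ = ⟨u, L v⟩ for all u, v ∈ E) and L ∘ d = 0. Then range(d) and range(L) are orthogonal to each other, both are orthogonal to the subspace (range d)ᗮ ⊓ ker L, and E is the internal direct sum of the three subspaces range(d), range(L), and (range d)ᗮ ⊓ ker L. -/
import Mathlib


open RealInnerProductSpace

/-- Finite-dimensional algebraic core of the Hodge decomposition (2.7) of
Branson–Gover: if `L` is symmetric and `L ∘ d = 0`, then `range d`, `range L`
and `(range d)ᗮ ⊓ ker L` are pairwise orthogonal and give an internal direct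
sum decomposition of `E`. -/
theorem stmt_0
    {E F : Type*} [NormedAddCommGroup E] [InnerProductSpace ℝ E]
    [FiniteDimensional ℝ E] [AddCommGroup F] [Module ℝ F]
    (d : F →ₗ[ℝ] E) (L : E →ₗ[ℝ] E)
    (hsym : ∀ u v : E, ⟪L u, v⟫ = ⟪u, L v⟫)
    (hLd : L ∘ₗ d = 0) :
    (∀ u ∈ LinearMap.range d, ∀ v ∈ LinearMap.range L, ⟪u, v⟫ = 0) ∧
    (∀ u ∈ LinearMap.range d,
        ∀ v ∈ (LinearMap.range d)ᗮ ⊓ LinearMap.ker L, ⟪u, v⟫ = 0) ∧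
    (∀ u ∈ LinearMap.range L,
        ∀ v ∈ (LinearMap.range d)ᗮ ⊓ LinearMap.ker L, ⟪u, v⟫ = 0) ∧
    DirectSum.IsInternal
      (![LinearMap.range d, LinearMap.range L,
         (LinearMap.range d)ᗮ ⊓ LinearMap.ker L] : Fin 3 → Submodule ℝ E) := by
  have hLd' : ∀ w : F, L (d w) = 0 := fun w => by
    have := congrFun (congrArg (fun f => f.toFun) hLd) w
    simpa using this
  have h1 : ∀ u ∈ LinearMap.range d, ∀ v ∈ LinearMap.range L, ⟪u, v⟫ = 0 := by
    rintro u ⟨w, rfl⟩ v ⟨x, rfl⟩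
    rw [real_inner_comm, hsym, hLd' w, inner_zero_right]
  have h2 : ∀ u ∈ LinearMap.range d,
      ∀ v ∈ (LinearMap.range d)ᗮ ⊓ LinearMap.ker L, ⟪u, v⟫ = 0 := by
    rintro u hu v ⟨hv, -⟩
    exact hv u hu
  have h3 : ∀ u ∈ LinearMap.range L,
      ∀ v ∈ (LinearMap.range d)ᗮ ⊓ LinearMap.ker L, ⟪u, v⟫ = 0 := by
    rintro u ⟨x, rfl⟩ v ⟨-, hv⟩
    rw [hsym, hv, inner_zero_right]
  refine ⟨h1, h2, h3, ?_⟩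
  set V : Fin 3 → Submodule ℝ E :=
    ![LinearMap.range d, LinearMap.range L,
      (LinearMap.range d)ᗮ ⊓ LinearMap.ker L] with hV
  have hortho : OrthogonalFamily ℝ (fun i => V i) fun i => (V i).subtypeₗᵢ := by
    intro i j hij u v
    fin_cases i <;> fin_cases j <;>
      first
        | exact absurd rfl hij
        | exact h1 u u.2 v v.2
        | exact h2 u u.2 v v.2
        | exact h3 u u.2 v v.2
        | (rw [real_inner_comm]; exact h1 v v.2 u u.2)
        | (rw [real_inner_comm]; exact h2 v v.2 u u.2)
        | (rw [real_inner_comm]; exact h3 v v.2 u u.2)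
  rw [hortho.isInternal_iff]
  rw [Submodule.eq_bot_iff]
  intro v hv
  have hv0 : ∀ i, ∀ u ∈ V i, ⟪u, v⟫ = 0 := by
    intro i u hu
    exact hv u (Submodule.mem_iSup_of_mem i hu)
  have hvD : v ∈ (LinearMap.range d)ᗮ := by
    intro u hu
    have := hv0 0 u (by simpa [V] using hu)
    simpa [real_inner_comm] using this
  have hvK : v ∈ LinearMap.ker L := by
    have h : ∀ u : E, ⟪L v, u⟫ = 0 := by
      intro u
      have := hv0 1 (L u) (by simp [V])
      rw [hsym] at this
      rw [real_inner_comm]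
      exact this
    exact inner_self_eq_zero.mp (h (L v))
  have := hv0 2 v (by simp [V]; exact ⟨hvD, hvK⟩)
  exact inner_self_eq_zero.mp this
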